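/- Risk distribution in terms of the ROC curve (Section 3.3). Let U : Ω → [0,1] have conditional distribution given D = 0 equal to the uniform distribution on [0,1], let ρ = P(D = 1) ∈ (0,1), and let G : [0,1] → ℝ be continuous and strictly decreasing with E[D | σ(U)] = expit(logit ρ + G(U)) almost surely. Define ROC(t) = ∫₀ᵗ exp(G(u)) du and Risk(u) = ρ·exp(G(u)) / (ρ·exp(G(u)) + 1 − ρ) (so Risk(u) = expit(logit ρ + G(u)) and Risk is strictly decreasing). Then for every t ∈ (0,1), P(Risk(U) ≤ Risk(t)) = 1 − (1 − ρ)·t − ρ·ROC(t). -/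

import Mathlib

open MeasureTheory Real Set

/-- The expit (inverse logit) function. -/
noncomputable def expit (x : ℝ) : ℝ := Real.exp x / (1 + Real.exp x)

/-- The logit function. -/
noncomputable def logit (p : ℝ) : ℝ := Real.log (p / (1 - p))

lemma expit_logit_add (ρ x : ℝ) (h0 : 0 < ρ) (h1 : ρ < 1) :
    expit (logit ρ + x) = ρ * Real.exp x / (ρ * Real.exp x + 1 - ρ) := by
  have h1' : 0 < 1 - ρ := by linarith
  have hρ : 0 < ρ / (1 - ρ) := div_pos h0 h1'
  have hx := Real.exp_pos x
  have hd1 : 0 < 1 + ρ / (1 - ρ) * Real.exp x := by positivity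
  have hd2 : 0 < ρ * Real.exp x + 1 - ρ := by nlinarith
  rw [expit, logit, Real.exp_add, Real.exp_log hρ]
  field_simp
  ring

lemma risk_mono (ρ a b : ℝ) (h0 : 0 < ρ) (h1 : ρ < 1) (ha : 0 < a) (hb : 0 < b) :
    ρ * a / (ρ * a + 1 - ρ) ≤ ρ * b / (ρ * b + 1 - ρ) ↔ a ≤ b := by
  have hda : 0 < ρ * a + 1 - ρ := by nlinarith
  have hdb : 0 < ρ * b + 1 - ρ := by nlinarith
  have hpos : 0 < ρ * (1 - ρ) := by nlinarith
  rw [div_le_div_iff₀ hda hdb]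
  constructor
  · intro h
    by_contra hc
    push_neg at hc
    have := mul_lt_mul_of_pos_left (sub_pos.mpr hc) hpos
    nlinarith
  · intro h
    nlinarith [mul_le_mul_of_nonneg_left h hpos.le]


/-- Risk distribution in terms of the ROC curve: under the logistic model on the
standardized marker `U` (uniform on `[0,1]` among controls) with continuous, strictly
decreasing `G`, defining `ROC(t) = ∫₀ᵗ exp(G u) du` and
`Risk(u) = ρ·exp(G u)/(ρ·exp(G u) + 1 − ρ)`, one has
`P(Risk(U) ≤ Risk(t)) = 1 − (1 − ρ)·t − ρ·ROC(t)` for all `t ∈ (0,1)`. -/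
theorem risk_distribution_from_roc
    {Ω : Type*} [MeasurableSpace Ω] (μ : Measure Ω) [IsProbabilityMeasure μ]
    (D : Set Ω) (hD : MeasurableSet D)
    (hρ0 : 0 < (μ D).toReal) (hρ1 : (μ D).toReal < 1)
    (U : Ω → ℝ) (hU : Measurable U) (hUrange : ∀ ω, U ω ∈ Icc (0:ℝ) 1)
    (hUnif : ∀ t ∈ Icc (0:ℝ) 1,
      (μ ({ω | U ω ≤ t} ∩ Dᶜ)).toReal = t * (μ Dᶜ).toReal)
    (G : ℝ → ℝ) (hGcont : ContinuousOn G (Icc (0:ℝ) 1))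
    (hGanti : StrictAntiOn G (Icc (0:ℝ) 1))
    (hmodel : μ[D.indicator (fun _ => (1:ℝ)) | MeasurableSpace.comap U Real.measurableSpace]
      =ᵐ[μ] fun ω => expit (logit (μ D).toReal + G (U ω)))
    (ROC Risk : ℝ → ℝ)
    (hROC : ∀ t, ROC t = ∫ u in (0:ℝ)..t, Real.exp (G u))
    (hRisk : ∀ u, Risk u = (μ D).toReal * Real.exp (G u) /
      ((μ D).toReal * Real.exp (G u) + 1 - (μ D).toReal)) :
    ∀ t ∈ Ioo (0:ℝ) 1,
      (μ {ω | Risk (U ω) ≤ Risk t}).toReal =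
        1 - (1 - (μ D).toReal) * t - (μ D).toReal * ROC t := by
  set ρ := (μ D).toReal with hρdef
  have h1ρ : 0 < 1 - ρ := by linarith
  have hDc : (μ Dᶜ).toReal = 1 - ρ := by
    have h : μ Dᶜ = 1 - μ D := by
      rw [measure_compl hD (measure_ne_top μ D), measure_univ]
    rw [h, ENNReal.toReal_sub_of_le prob_le_one ENNReal.one_ne_top, ENNReal.toReal_one]
  -- measurability of G ∘ U
  have hgm : Measurable fun ω => G (U ω) := by
    have h1 : Continuous ((Icc (0:ℝ) 1).restrict G) :=
      continuousOn_iff_continuous_restrict.mp hGcont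
    have h2 : Measurable fun ω => (⟨U ω, hUrange ω⟩ : Icc (0:ℝ) 1) := hU.subtype_mk
    exact h1.measurable.comp h2
  have hrU : Measurable fun ω => Risk (U ω) := by
    simp only [hRisk]
    exact (measurable_const.mul hgm.exp).div
      (((measurable_const.mul hgm.exp).add_const 1).sub_const ρ)
  have hden : ∀ u : ℝ, 0 < ρ * Real.exp (G u) + 1 - ρ := fun u => by
    nlinarith [Real.exp_pos (G u)]
  have hr0 : ∀ u : ℝ, 0 ≤ Risk u := fun u => by
    rw [hRisk]; exact div_nonneg (by positivity) (hden u).le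
  have hr1 : ∀ u : ℝ, Risk u < 1 := fun u => by
    rw [hRisk, div_lt_one (hden u)]; linarith
  have hrint : Integrable (fun ω => Risk (U ω)) μ := by
    refine ⟨hrU.aestronglyMeasurable, ?_⟩
    refine HasFiniteIntegral.of_bounded (C := 1) (ae_of_all _ fun ω => ?_)
    rw [Real.norm_eq_abs, abs_of_nonneg (hr0 _)]
    exact (hr1 _).le
  -- the conditional expectation identity
  have hm : MeasurableSpace.comap U Real.measurableSpace ≤ _ := hU.comap_le
  have hind : Integrable (D.indicator fun _ => (1:ℝ)) μ := (integrable_const 1).indicator hD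
  have hkey : ∀ B : Set ℝ, MeasurableSet B →
      (μ (U ⁻¹' B ∩ D)).toReal = ∫ ω in U ⁻¹' B, Risk (U ω) ∂μ := by
    intro B hB
    have hA : MeasurableSet[MeasurableSpace.comap U Real.measurableSpace] (U ⁻¹' B) :=
      ⟨B, hB, rfl⟩
    have h1 := setIntegral_condExp hm hind hA
    have h2 : ∫ ω in U ⁻¹' B, D.indicator (fun _ => (1:ℝ)) ω ∂μ = (μ (U ⁻¹' B ∩ D)).toReal := by
      rw [setIntegral_indicator hD, setIntegral_const, smul_eq_mul, mul_one, measureReal_def]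
    have h3 : ∫ ω in U ⁻¹' B,
        (μ[D.indicator (fun _ => (1:ℝ)) | MeasurableSpace.comap U Real.measurableSpace]) ω ∂μ
        = ∫ ω in U ⁻¹' B, Risk (U ω) ∂μ := by
      refine setIntegral_congr_ae (hU hB) ?_
      filter_upwards [hmodel] with ω hω _
      rw [hω, expit_logit_add ρ _ hρ0 hρ1, hRisk]
    rw [← h3, h1, h2]
  have hcompl : ∀ B : Set ℝ, MeasurableSet B →
      (μ (U ⁻¹' B ∩ Dᶜ)).toReal = ∫ ω in U ⁻¹' B, (1 - Risk (U ω)) ∂μ := by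
    intro B hB
    have hsplit : μ (U ⁻¹' B ∩ D) + μ (U ⁻¹' B ∩ Dᶜ) = μ (U ⁻¹' B) := by
      rw [← measure_inter_add_diff (U ⁻¹' B) hD, diff_eq]
    have htr : (μ (U ⁻¹' B ∩ D)).toReal + (μ (U ⁻¹' B ∩ Dᶜ)).toReal = (μ (U ⁻¹' B)).toReal := by
      rw [← ENNReal.toReal_add (measure_ne_top _ _) (measure_ne_top _ _), hsplit]
    have h4 : ∫ _ω in U ⁻¹' B, (1:ℝ) ∂μ = (μ (U ⁻¹' B)).toReal := by
      rw [setIntegral_const, smul_eq_mul, mul_one, measureReal_def]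
    rw [integral_sub (integrable_const 1).restrict hrint.restrict, h4, ← hkey B hB]
    linarith
  -- the pushforward of the control measure is uniform
  set ν : Measure ℝ := (ENNReal.ofReal (1 - ρ)) • (volume.restrict (Icc (0:ℝ) 1)) with hν
  set wd : Measure Ω := μ.withDensity (fun ω => ENNReal.ofReal (1 - Risk (U ω))) with hwd
  have hmapDc : ∀ B : Set ℝ, MeasurableSet B →
      Measure.map U (μ.restrict Dᶜ) B = μ (U ⁻¹' B ∩ Dᶜ) := fun B hB => by
    rw [Measure.map_apply hU hB, Measure.restrict_apply (hU hB)]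
  have hwdB : ∀ B : Set ℝ, MeasurableSet B → wd (U ⁻¹' B) = μ (U ⁻¹' B ∩ Dᶜ) := by
    intro B hB
    rw [hwd, withDensity_apply _ (hU hB)]
    have hint : Integrable (fun ω => 1 - Risk (U ω)) (μ.restrict (U ⁻¹' B)) :=
      ((integrable_const 1).sub hrint).restrict
    have hpos : 0 ≤ᵐ[μ.restrict (U ⁻¹' B)] fun ω => 1 - Risk (U ω) :=
      ae_of_all _ fun ω => by simp only [Pi.zero_apply]; linarith [hr1 (U ω)]
    rw [← ofReal_integral_eq_lintegral_ofReal hint hpos, ← hcompl B hB,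
      ENNReal.ofReal_toReal (measure_ne_top _ _)]
  have hmap_eq : Measure.map U wd = Measure.map U (μ.restrict Dᶜ) := by
    ext B hB
    rw [Measure.map_apply hU hB, hmapDc B hB, hwdB B hB]
  have hη : Measure.map U (μ.restrict Dᶜ) = ν := by
    haveI : IsFiniteMeasure (Measure.map U (μ.restrict Dᶜ)) := by
      constructor
      rw [Measure.map_apply hU MeasurableSet.univ, preimage_univ]
      exact measure_lt_top _ _
    refine Measure.ext_of_Iic _ _ (fun a => ?_)
    rw [hmapDc _ measurableSet_Iic]
    rcases lt_or_ge a 0 with ha0 | ha0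
    · have he : U ⁻¹' Iic a ∩ Dᶜ = ∅ := by
        refine eq_empty_of_forall_notMem fun ω hω => ?_
        have := hω.1
        simp only [mem_preimage, mem_Iic] at this
        linarith [(hUrange ω).1]
      have he2 : Iic a ∩ Icc (0:ℝ) 1 = ∅ := by
        refine eq_empty_of_forall_notMem fun x hx => ?_
        rcases hx with ⟨h1, h2, _⟩
        simp only [mem_Iic] at h1
        linarith
      rw [he, measure_empty, hν, Measure.smul_apply,
        Measure.restrict_apply measurableSet_Iic, he2, measure_empty, smul_zero]
    rcases le_or_gt a 1 with ha1 | ha1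
    · have ha : a ∈ Icc (0:ℝ) 1 := ⟨ha0, ha1⟩
      have hUa := hUnif a ha
      rw [hDc] at hUa
      have hseteq : {ω | U ω ≤ a} = U ⁻¹' Iic a := rfl
      rw [hseteq] at hUa
      have hL : μ (U ⁻¹' Iic a ∩ Dᶜ) = ENNReal.ofReal (a * (1 - ρ)) := by
        rw [← ENNReal.ofReal_toReal (measure_ne_top μ (U ⁻¹' Iic a ∩ Dᶜ)), hUa]
      have he2 : Iic a ∩ Icc (0:ℝ) 1 = Icc 0 a := by
        ext x
        simp only [mem_inter_iff, mem_Iic, mem_Icc]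
        constructor
        · rintro ⟨h1, h2, _⟩; exact ⟨h2, h1⟩
        · rintro ⟨h1, h2⟩; exact ⟨h2, h1, by linarith⟩
      rw [hL, hν, Measure.smul_apply, Measure.restrict_apply measurableSet_Iic, he2,
        Real.volume_Icc, smul_eq_mul, ← ENNReal.ofReal_mul h1ρ.le]
      rw [show (1 - ρ) * (a - 0) = a * (1 - ρ) by ring]
    · have he : U ⁻¹' Iic a = univ := by
        refine eq_univ_of_forall fun ω => ?_
        simp only [mem_preimage, mem_Iic]
        linarith [(hUrange ω).2]
      have he2 : Iic a ∩ Icc (0:ℝ) 1 = Icc 0 1 := by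
        refine inter_eq_self_of_subset_right fun x hx => ?_
        simp only [mem_Iic]
        linarith [hx.2]
      rw [he, univ_inter, hν, Measure.smul_apply,
        Measure.restrict_apply measurableSet_Iic, he2, Real.volume_Icc, smul_eq_mul]
      rw [← ENNReal.ofReal_toReal (measure_ne_top μ Dᶜ), hDc]
      norm_num
  have hν_eq : Measure.map U wd = ν := hmap_eq.trans hη
  -- the density computation for cases
  have hDkey : ∀ s ∈ Icc (0:ℝ) 1,
      (μ (U ⁻¹' Iic s ∩ D)).toReal = ρ * ∫ u in (0:ℝ)..s, Real.exp (G u) := by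
    intro s hs
    have hpoint : ∀ ω : Ω, Risk (U ω) =
        (1 - Risk (U ω)) * (Real.exp (G (U ω)) * (ρ / (1 - ρ))) := by
      intro ω
      rw [hRisk]
      have hd := hden (U ω)
      field_simp
      ring
    have hf'meas : Measurable fun ω => Real.toNNReal (1 - Risk (U ω)) :=
      (measurable_const.sub hrU).real_toNNReal
    have hstep1 : ∫ ω in U ⁻¹' Iic s, Risk (U ω) ∂μ
        = ∫ ω in U ⁻¹' Iic s, Real.exp (G (U ω)) * (ρ / (1 - ρ)) ∂wd := by
      rw [hwd, restrict_withDensity (hU measurableSet_Iic)]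
      rw [show (fun ω => ENNReal.ofReal (1 - Risk (U ω)))
          = (fun ω => ((Real.toNNReal (1 - Risk (U ω)) : NNReal) : ENNReal)) from rfl]
      rw [integral_withDensity_eq_integral_smul hf'meas]
      refine setIntegral_congr_fun (hU measurableSet_Iic) fun ω _ => ?_
      rw [NNReal.smul_def, Real.coe_toNNReal _ (by linarith [hr1 (U ω)])]
      exact hpoint ω
    have hG_asm : AEStronglyMeasurable (fun u => Real.exp (G u) * (ρ / (1 - ρ))) ν := by
      have hc : ContinuousOn (fun u => Real.exp (G u) * (ρ / (1 - ρ))) (Icc (0:ℝ) 1) :=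
        (Real.continuous_exp.comp_continuousOn hGcont).mul continuousOn_const
      have h1 : AEStronglyMeasurable (fun u => Real.exp (G u) * (ρ / (1 - ρ)))
          (volume.restrict (Icc (0:ℝ) 1)) := hc.aestronglyMeasurable measurableSet_Icc
      rw [hν]
      exact h1.mono_ac Measure.smul_absolutelyContinuous
    have hstep2 : ∫ ω in U ⁻¹' Iic s, Real.exp (G (U ω)) * (ρ / (1 - ρ)) ∂wd
        = ∫ u in Iic s, Real.exp (G u) * (ρ / (1 - ρ)) ∂(Measure.map U wd) := by
      rw [setIntegral_map measurableSet_Iic (by rw [hν_eq]; exact hG_asm) hU.aemeasurable]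
    have he2 : Iic s ∩ Icc (0:ℝ) 1 = Icc 0 s := by
      ext x
      simp only [mem_inter_iff, mem_Iic, mem_Icc]
      constructor
      · rintro ⟨h1, h2, _⟩; exact ⟨h2, h1⟩
      · rintro ⟨h1, h2⟩; exact ⟨h2, h1, by linarith [hs.2]⟩
    have hstep3 : ∫ u in Iic s, Real.exp (G u) * (ρ / (1 - ρ)) ∂ν
        = (1 - ρ) * ((∫ u in (0:ℝ)..s, Real.exp (G u)) * (ρ / (1 - ρ))) := by
      rw [hν, Measure.restrict_smul, integral_smul_measure,
        Measure.restrict_restrict measurableSet_Iic, he2,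
        ENNReal.toReal_ofReal h1ρ.le, integral_Icc_eq_integral_Ioc,
        ← intervalIntegral.integral_of_le hs.1, intervalIntegral.integral_mul_const,
        smul_eq_mul]
    rw [hkey _ measurableSet_Iic, hstep1, hstep2, hν_eq, hstep3]
    field_simp
  -- assemble
  intro t ht
  have htIcc : t ∈ Icc (0:ℝ) 1 := ⟨ht.1.le, ht.2.le⟩
  -- no atom at t
  have hDc_atom : μ (U ⁻¹' {t} ∩ Dᶜ) = 0 := by
    have hbound : ∀ s, 0 ≤ s → s < t → (μ (U ⁻¹' {t} ∩ Dᶜ)).toReal ≤ (t - s) * (1 - ρ) := by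
      intro s hs0 hst
      have hsub : U ⁻¹' {t} ∩ Dᶜ ⊆ ({ω | U ω ≤ t} ∩ Dᶜ) \ ({ω | U ω ≤ s} ∩ Dᶜ) := by
        rintro ω ⟨h1, h2⟩
        simp only [mem_preimage, mem_singleton_iff] at h1
        constructor
        · exact ⟨by simp [h1], h2⟩
        · rintro ⟨h3, _⟩
          simp only [mem_setOf_eq] at h3
          rw [h1] at h3
          linarith
      have hmono : ({ω | U ω ≤ s} ∩ Dᶜ) ⊆ ({ω | U ω ≤ t} ∩ Dᶜ) := by
        rintro ω ⟨h1, h2⟩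
        exact ⟨le_trans h1 hst.le, h2⟩
      have hmeas_s : MeasurableSet ({ω | U ω ≤ s} ∩ Dᶜ) :=
        (hU measurableSet_Iic).inter hD.compl
      have hdiff : μ (({ω | U ω ≤ t} ∩ Dᶜ) \ ({ω | U ω ≤ s} ∩ Dᶜ))
          = μ ({ω | U ω ≤ t} ∩ Dᶜ) - μ ({ω | U ω ≤ s} ∩ Dᶜ) :=
        measure_diff hmono hmeas_s.nullMeasurableSet (measure_ne_top _ _)
      have h1 := ENNReal.toReal_mono (by
          rw [hdiff]
          exact (tsub_le_self.trans_lt (measure_lt_top _ _)).ne) (measure_mono hsub)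
      rw [hdiff, ENNReal.toReal_sub_of_le (measure_mono hmono) (measure_ne_top _ _)] at h1
      rw [hUnif t htIcc, hUnif s ⟨hs0, by linarith [ht.2]⟩, hDc] at h1
      calc (μ (U ⁻¹' {t} ∩ Dᶜ)).toReal ≤ t * (1 - ρ) - s * (1 - ρ) := h1
        _ = (t - s) * (1 - ρ) := by ring
    have h0 : (μ (U ⁻¹' {t} ∩ Dᶜ)).toReal ≤ 0 := by
      refine le_of_forall_pos_le_add fun ε hε => ?_
      have hsle : max 0 (t - ε / (1 - ρ)) < t :=
        max_lt ht.1 (by have : 0 < ε / (1 - ρ) := div_pos hε h1ρ; linarith)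
      have := hbound (max 0 (t - ε / (1 - ρ))) (le_max_left _ _) hsle
      have h2 : (t - max 0 (t - ε / (1 - ρ))) * (1 - ρ) ≤ ε := by
        have h3 : t - ε / (1 - ρ) ≤ max 0 (t - ε / (1 - ρ)) := le_max_right _ _
        have h4 : t - max 0 (t - ε / (1 - ρ)) ≤ ε / (1 - ρ) := by linarith
        calc (t - max 0 (t - ε / (1 - ρ))) * (1 - ρ) ≤ (ε / (1 - ρ)) * (1 - ρ) :=
              mul_le_mul_of_nonneg_right h4 h1ρ.le
          _ = ε := by field_simp
      linarith
    have := le_antisymm h0 ENNReal.toReal_nonneg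
    rw [ENNReal.toReal_eq_zero_iff] at this
    exact this.resolve_right (measure_ne_top _ _)
  have hD_atom : μ (U ⁻¹' {t} ∩ D) = 0 := by
    have hk := hkey {t} (measurableSet_singleton t)
    have hconst : ∫ ω in U ⁻¹' {t}, Risk (U ω) ∂μ = (μ (U ⁻¹' {t})).toReal * Risk t := by
      rw [setIntegral_congr_fun (hU (measurableSet_singleton t))
        (g := fun _ => Risk t) (fun ω hω => by
          simp only [mem_preimage, mem_singleton_iff] at hω
          rw [hω]), setIntegral_const, smul_eq_mul, measureReal_def]
    have hsplit : μ (U ⁻¹' {t} ∩ D) + μ (U ⁻¹' {t} ∩ Dᶜ) = μ (U ⁻¹' {t}) := by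
      rw [← measure_inter_add_diff (U ⁻¹' {t}) hD, diff_eq]
    have hAeq : μ (U ⁻¹' {t}) = μ (U ⁻¹' {t} ∩ D) := by
      rw [← hsplit, hDc_atom, add_zero]
    have hx0 : (μ (U ⁻¹' {t} ∩ D)).toReal = (μ (U ⁻¹' {t} ∩ D)).toReal * Risk t := by
      rw [hconst, hAeq] at hk
      exact hk
    have hx : (μ (U ⁻¹' {t} ∩ D)).toReal = 0 := by
      by_contra hne
      have hxpos : 0 < (μ (U ⁻¹' {t} ∩ D)).toReal :=
        lt_of_le_of_ne ENNReal.toReal_nonneg (Ne.symm hne)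
      nlinarith [mul_lt_mul_of_pos_left (hr1 t) hxpos]
    rw [ENNReal.toReal_eq_zero_iff] at hx
    exact hx.resolve_right (measure_ne_top _ _)
  have hatom : μ (U ⁻¹' {t}) = 0 := by
    rw [← measure_inter_add_diff (U ⁻¹' {t}) hD, diff_eq, hD_atom, hDc_atom, add_zero]
  -- set identities
  have hset : {ω | Risk (U ω) ≤ Risk t} = (U ⁻¹' Iio t)ᶜ := by
    ext ω
    simp only [mem_setOf_eq, mem_compl_iff, mem_preimage, mem_Iio, not_lt]
    rw [hRisk (U ω), hRisk t,
      risk_mono ρ _ _ hρ0 hρ1 (Real.exp_pos _) (Real.exp_pos _), Real.exp_le_exp]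
    constructor
    · intro h
      by_contra hc
      push_neg at hc
      have := hGanti (hUrange ω) htIcc hc
      linarith
    · intro h
      rcases eq_or_lt_of_le h with heq | hlt
      · rw [← heq]
      · exact (hGanti htIcc (hUrange ω) hlt).le
  have hIio : μ (U ⁻¹' Iio t) = μ (U ⁻¹' Iic t) := by
    apply le_antisymm (measure_mono (preimage_mono Iio_subset_Iic_self))
    have : U ⁻¹' Iic t ⊆ U ⁻¹' Iio t ∪ U ⁻¹' {t} := by
      intro ω hω
      rcases lt_or_eq_of_le (show U ω ≤ t from hω) with h | h
      · exact Or.inl h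
      · exact Or.inr h
    calc μ (U ⁻¹' Iic t) ≤ μ (U ⁻¹' Iio t ∪ U ⁻¹' {t}) := measure_mono this
      _ ≤ μ (U ⁻¹' Iio t) + μ (U ⁻¹' {t}) := measure_union_le _ _
      _ = μ (U ⁻¹' Iio t) := by rw [hatom, add_zero]
  have hIic_val : (μ (U ⁻¹' Iic t)).toReal = ρ * ROC t + t * (1 - ρ) := by
    have hsplit : μ (U ⁻¹' Iic t ∩ D) + μ (U ⁻¹' Iic t ∩ Dᶜ) = μ (U ⁻¹' Iic t) := by
      rw [← measure_inter_add_diff (U ⁻¹' Iic t) hD, diff_eq]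
    have htr : (μ (U ⁻¹' Iic t ∩ D)).toReal + (μ (U ⁻¹' Iic t ∩ Dᶜ)).toReal
        = (μ (U ⁻¹' Iic t)).toReal := by
      rw [← ENNReal.toReal_add (measure_ne_top _ _) (measure_ne_top _ _), hsplit]
    have h1 := hDkey t htIcc
    have h2 := hUnif t htIcc
    rw [hDc] at h2
    rw [← htr, h1, ← hROC t]
    have : ({ω | U ω ≤ t} : Set Ω) = U ⁻¹' Iic t := rfl
    rw [this] at h2
    rw [h2]
  rw [hset]
  have hcompl_meas : (μ ((U ⁻¹' Iio t)ᶜ)).toReal = 1 - (μ (U ⁻¹' Iio t)).toReal := by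
    rw [measure_compl (hU measurableSet_Iio) (measure_ne_top _ _), measure_univ,
      ENNReal.toReal_sub_of_le prob_le_one ENNReal.one_ne_top, ENNReal.toReal_one]
  rw [hcompl_meas, hIio, hIic_val]
  ring
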